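/- Let α = −c/b ∈ ℚ be rational with b ∈ ℤ \ pℤ, c ∈ pℤ, b, c coprime, c ≠ 0. Then u(α) p^{v_p(α)}/α = −b, where u(α) = c'|c'|_p for the constant term c' of the minimal polynomial bX + c of α; consequently T₁(α) and T₂(α) both lie in pℤ ⊂ ℚ, i.e., they are rational Hensel roots. -/

import Mathlib

/-- Section 9, Case A: let `α = −c/b ∈ pℤ_p ∩ ℚ` with minimal polynomial `bX + c`
(`b ∈ ℤ \ pℤ`, `c ∈ pℤ`, `b, c` coprime, `b > 0`, `c ≠ 0`). Then
`u(α) p^{v_p(α)}/α = −b` where `u(α) = c|c|_p`; consequently, for the digits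
`d₁ = (−b) % p` and `d₂ = b % p` in `{1,…,p−1}`, both `T₁(α) = −b − d₁` and
`T₂(α) = b − d₂` lie in `pℤ ⊆ ℚ`, i.e. they are rational Hensel roots. -/
theorem stmt_17 (p : ℕ) [Fact p.Prime] (b c : ℤ)
    (hb : ¬ (p : ℤ) ∣ b) (hbpos : 0 < b) (hc : (p : ℤ) ∣ c) (hc0 : c ≠ 0)
    (hcop : Int.gcd b c = 1) :
    (c : ℚ_[p]) * (p : ℚ_[p]) ^ (-(c : ℚ_[p]).valuation)
        * (p : ℚ_[p]) ^ ((-(c : ℚ_[p]) / (b : ℚ_[p])).valuation)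
        / (-(c : ℚ_[p]) / (b : ℚ_[p])) = (-b : ℤ) ∧
    (1 ≤ (-b) % (p : ℤ) ∧ (-b) % (p : ℤ) ≤ (p : ℤ) - 1 ∧
      (p : ℤ) ∣ (-b - (-b) % (p : ℤ))) ∧
    (1 ≤ b % (p : ℤ) ∧ b % (p : ℤ) ≤ (p : ℤ) - 1 ∧
      (p : ℤ) ∣ (b - b % (p : ℤ))) := by
  have hppos : (0 : ℤ) < p := Int.natCast_pos.mpr (Fact.out : p.Prime).pos
  have hb0 : b ≠ 0 := hbpos.ne'
  constructor
  · -- the analytic part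
    have hbQ : (b : ℚ_[p]) ≠ 0 := Int.cast_ne_zero.mpr hb0
    have hcQ : (c : ℚ_[p]) ≠ 0 := Int.cast_ne_zero.mpr hc0
    have hpQ : (p : ℚ_[p]) ≠ 0 := Nat.cast_ne_zero.mpr (Fact.out : p.Prime).pos.ne'
    have hval : (-(c : ℚ_[p]) / (b : ℚ_[p])).valuation = (c : ℚ_[p]).valuation := by
      have h1 : -(c : ℚ_[p]) / (b : ℚ_[p]) = (((-c / b : ℚ) : ℚ_[p])) := by
        push_cast; ring
      rw [h1, Padic.valuation_ratCast, Padic.valuation_intCast]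
      have hcq : ((-c : ℚ)) ≠ 0 := by exact_mod_cast neg_ne_zero.mpr hc0
      have hbq : ((b : ℚ)) ≠ 0 := by exact_mod_cast hb0
      rw [padicValRat.div hcq hbq]
      rw [show ((-c : ℚ)) = ((-c : ℤ) : ℚ) by push_cast; ring,
        show ((b : ℚ)) = ((b : ℤ) : ℚ) from rfl,
        padicValRat.of_int, padicValRat.of_int, padicValInt.eq_zero_of_not_dvd hb]
      have : padicValInt p (-c) = padicValInt p c := by
        unfold padicValInt; rw [Int.natAbs_neg]
      omega
    rw [hval]
    rw [mul_assoc, ← zpow_add₀ hpQ, neg_add_cancel, zpow_zero, mul_one]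
    rw [div_eq_iff (by simpa [div_eq_zero_iff, hbQ] using neg_ne_zero.mpr hcQ)]
    push_cast
    field_simp
  constructor
  · have h1 : (-b) % (p : ℤ) ≠ 0 := by
      intro h
      exact hb (Int.dvd_neg.mp (Int.dvd_of_emod_eq_zero h))
    have h2 := Int.emod_nonneg (-b) hppos.ne'
    have h3 := Int.emod_lt_of_pos (-b) hppos
    have h4 := Int.mul_ediv_add_emod (-b) (p : ℤ)
    exact ⟨by omega, by omega, ⟨(-b) / (p : ℤ), by omega⟩⟩
  · have h1 : b % (p : ℤ) ≠ 0 := fun h => hb (Int.dvd_of_emod_eq_zero h)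
    have h2 := Int.emod_nonneg b hppos.ne'
    have h3 := Int.emod_lt_of_pos b hppos
    have h4 := Int.mul_ediv_add_emod b (p : ℤ)
    exact ⟨by omega, by omega, ⟨b / (p : ℤ), by omega⟩⟩
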